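/- Let B = [[f, 1], [-1, f]] with f ≥ 0, and let R be any nonsingular 2×2 real matrix. Then ρ(|B|) ≤ ρ(|R B R⁻¹|), where |·| denotes the entrywise absolute value and ρ the spectral radius. In other words, no similarity transformation can decrease the spectral radius of the absolute value of such a block below f + 1. -/

import Mathlib

lemma mem_spec_iff (M : Matrix (Fin 2) (Fin 2) ℂ) (μ : ℂ) :
    μ ∈ spectrum ℂ M ↔ (μ - M 0 0) * (μ - M 1 1) - M 0 1 * M 1 0 = 0 := by
  rw [spectrum.mem_iff, Matrix.isUnit_iff_isUnit_det, isUnit_iff_ne_zero, not_ne_iff,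
    Matrix.det_fin_two]
  simp [Matrix.algebraMap_eq_diagonal, Matrix.diagonal]

lemma key (f a b c d : ℝ) (hf : 0 ≤ f) (htr : a + d = 2*f) (hdet : a*d - b*c = f^2+1) :
    f + 1 ≤ ((|a| + |d|) + Real.sqrt ((|a| - |d|)^2 + 4*(|b| * |c|))) / 2 := by
  have hqr : |b| * |c| = |a*d - (f^2+1)| := by
    rw [← abs_mul]; congr 1; linarith
  have had2 : a*d ≤ f^2 := by nlinarith [sq_nonneg (a - d)]
  have hD : 0 ≤ (|a| - |d|)^2 + 4*(|b| * |c|) := by positivity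
  set w := Real.sqrt ((|a| - |d|)^2 + 4*(|b| * |c|)) with hwdef
  have hw0 : 0 ≤ w := Real.sqrt_nonneg _
  have hw2 : w^2 = (|a| - |d|)^2 + 4*(|b| * |c|) := Real.sq_sqrt hD
  have hs : 2*f ≤ |a| + |d| := by
    calc 2*f = |a + d| := by rw [htr]; exact (abs_of_nonneg (by linarith)).symm
    _ ≤ |a| + |d| := abs_add_le a d
  have habs : |a*d - (f^2+1)| = f^2 + 1 - a*d := by
    rw [abs_of_nonpos (by linarith)]; ring
  rcases le_or_gt (a*d) 0 with had | had
  · have hpt : |a| * |d| = -(a*d) := by rw [← abs_mul, abs_of_nonpos had]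
    have hw2' : w^2 = (|a|+|d|)^2 + 4*f^2 + 4 := by
      rw [hw2, hqr, habs]; nlinarith [hpt]
    nlinarith [hw0, hs, hf, hw2', sq_nonneg (w - (2*f + 2 - (|a|+|d|))),
      mul_nonneg hw0 hf, mul_le_mul_of_nonneg_left hs hf]
  · have hpos : 0 < a ∧ 0 < d := by
      rcases mul_pos_iff.mp had with h | h
      · exact h
      · exfalso; nlinarith [h.1, h.2]
    have hpa : |a| = a := abs_of_pos hpos.1
    have hpd : |d| = d := abs_of_pos hpos.2
    have hw2' : w^2 = 8*f^2 - 8*(a*d) + 4 := by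
      rw [hw2, hqr, habs, hpa, hpd]; nlinarith
    have hwge : 2 ≤ w := by nlinarith [hw0, hw2', had2]
    rw [hpa, hpd]
    nlinarith [hwge, htr]

noncomputable def specRad {m : Type*} [Fintype m] [DecidableEq m] (M : Matrix m m ℝ) : ℝ :=
  sSup ((fun μ : ℂ => ‖μ‖) '' spectrum ℂ (M.map Complex.ofReal))

theorem stmt2 (f : ℝ) (hf : 0 ≤ f) (R : Matrix (Fin 2) (Fin 2) ℝ) (hR : IsUnit R.det) :
    specRad ((!![f, 1; -1, f] : Matrix (Fin 2) (Fin 2) ℝ).map fun x => |x|) ≤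
      specRad ((R * !![f, 1; -1, f] * R⁻¹).map fun x => |x|) := by
  have hlhs : specRad ((!![f, 1; -1, f] : Matrix (Fin 2) (Fin 2) ℝ).map fun x => |x|) ≤ f + 1 := by
    apply Real.sSup_le _ (by linarith)
    rintro x ⟨μ, hμ, rfl⟩
    rw [mem_spec_iff] at hμ
    norm_num [Matrix.map_apply, abs_of_nonneg hf] at hμ
    have hfac : (μ - (↑f + 1)) * (μ - (↑f - 1)) = 0 := by
      linear_combination hμ
    rcases mul_eq_zero.mp hfac with h | h
    · have : μ = ((f + 1 : ℝ) : ℂ) := by push_cast; linear_combination h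
      simp only [this, Complex.norm_real, Real.norm_eq_abs]
      rw [abs_of_nonneg (by linarith : (0:ℝ) ≤ f + 1)]
    · have : μ = ((f - 1 : ℝ) : ℂ) := by push_cast; linear_combination h
      simp only [this, Complex.norm_real, Real.norm_eq_abs]
      rw [abs_le]; constructor <;> linarith
  refine le_trans hlhs ?_
  set C := R * !![f, 1; -1, f] * R⁻¹ with hC
  have hdR : R.det ≠ 0 := hR.ne_zero
  have htr : C 0 0 + C 1 1 = 2 * f := by
    have h1 : Matrix.trace C = Matrix.trace (!![f, 1; -1, f] : Matrix (Fin 2) (Fin 2) ℝ) := by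
      rw [hC, Matrix.trace_mul_cycle, Matrix.nonsing_inv_mul R hR, Matrix.one_mul]
    rw [Matrix.trace_fin_two, Matrix.trace_fin_two] at h1
    norm_num at h1
    linarith [h1]
  have hdet : C 0 0 * C 1 1 - C 0 1 * C 1 0 = f ^ 2 + 1 := by
    have h1 : C.det = f ^ 2 + 1 := by
      rw [hC, Matrix.det_mul, Matrix.det_mul, Matrix.det_nonsing_inv, Ring.inverse_eq_inv',
        Matrix.det_fin_two_of]
      field_simp
      ring
    rw [Matrix.det_fin_two] at h1
    exact h1
  have hkey := key f (C 0 0) (C 0 1) (C 1 0) (C 1 1) hf htr hdet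
  set p := |C 0 0|; set t := |C 1 1|; set q := |C 0 1|; set r := |C 1 0|
  have hD : (0:ℝ) ≤ (p - t) ^ 2 + 4 * (q * r) := by positivity
  set lam : ℝ := ((p + t) + Real.sqrt ((p - t) ^ 2 + 4 * (q * r))) / 2 with hlam
  have hw2 : Real.sqrt ((p - t) ^ 2 + 4 * (q * r)) ^ 2 = (p - t) ^ 2 + 4 * (q * r) :=
    Real.sq_sqrt hD
  have hmem : ((lam : ℝ) : ℂ) ∈ spectrum ℂ ((C.map fun x => |x|).map Complex.ofReal) := by
    rw [mem_spec_iff]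
    simp only [Matrix.map_apply]
    have hreal : (lam - p) * (lam - t) - q * r = 0 := by
      rw [hlam]
      linear_combination hw2 / 4
    exact_mod_cast congrArg (Complex.ofReal) hreal
  have hlam0 : 0 ≤ lam := by linarith
  have hbdd : BddAbove ((fun μ : ℂ => ‖μ‖) ''
      spectrum ℂ (((C.map fun x => |x|)).map Complex.ofReal)) :=
    ((Matrix.finite_spectrum _).image _).bddAbove
  have hle := le_csSup hbdd ⟨((lam : ℝ) : ℂ), hmem, rfl⟩
  refine le_trans ?_ hle
  simp only [Complex.norm_real, Real.norm_eq_abs]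
  rw [abs_of_nonneg hlam0]
  exact hkey
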